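/- Let G be an ordered graph on [n] and let r ∈ ℕ with r ≥ 1. Then |{H ∈ ∂G : m(H) ≤ m(G) + 2r + 1}| ≥ (1/2)(1 − 1/r)·n − m(G)/2, as an inequality of real numbers. -/

import Mathlib

namespace OrderedGraphs

/-- The order-preserving map `Fin (n-1) → Fin n` that skips the vertex `v`. -/
def delMap {n : ℕ} (v : Fin n) (i : Fin (n - 1)) : Fin n :=
  if h : (i : ℕ) < (v : ℕ) then ⟨i, lt_trans h v.isLt⟩
  else ⟨(i : ℕ) + 1, by have h1 := i.isLt; have h2 := v.isLt; omega⟩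

/-- `erase G v` is the ordered graph `G − v` on `[n-1]`, obtained by deleting `v` and
relabelling the remaining vertices order-preservingly. -/
def erase {n : ℕ} (G : SimpleGraph (Fin n)) (v : Fin n) : SimpleGraph (Fin (n - 1)) where
  Adj i j := G.Adj (delMap v i) (delMap v j)
  symm := ⟨fun i j h => G.adj_symm h⟩
  loopless := ⟨fun i h => G.irrefl h⟩

/-- The shadow `∂G` of a single ordered graph. -/
def shadow {n : ℕ} (G : SimpleGraph (Fin n)) : Set (SimpleGraph (Fin (n - 1))) :=
  {H | ∃ v : Fin n, H = erase G v}

/-- The shadow `∂𝒢` of a collection of ordered graphs. -/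
def shadowCol {n : ℕ} (𝒢 : Set (SimpleGraph (Fin n))) : Set (SimpleGraph (Fin (n - 1))) :=
  ⋃ G ∈ 𝒢, shadow G

/-- `x ∼ y` : the relation `Γ(x) \ {y} = Γ(y) \ {x}`. -/
def simRel {n : ℕ} (G : SimpleGraph (Fin n)) (x y : Fin n) : Prop :=
  G.neighborSet x \ {y} = G.neighborSet y \ {x}

/-- A set of consecutive vertices whose elements are pairwise `∼`-equivalent. -/
def IsHomInterval {n : ℕ} (G : SimpleGraph (Fin n)) (B : Set (Fin n)) : Prop :=
  B.OrdConnected ∧ ∀ x ∈ B, ∀ y ∈ B, simRel G x y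

/-- A homogeneous block: a maximal nonempty set of consecutive vertices whose elements are
pairwise `∼`-equivalent. -/
def IsHomBlock {n : ℕ} (G : SimpleGraph (Fin n)) (B : Set (Fin n)) : Prop :=
  B.Nonempty ∧ IsHomInterval G B ∧ ∀ C, IsHomInterval G C → B ⊆ C → B = C

open Classical in
/-- The excess `m(G) = Σ_{B : |B| ≥ 3} (|B| − 2)`, the sum over homogeneous blocks;
(truncated ℕ-subtraction makes blocks with `|B| ≤ 2` contribute `0`). -/
noncomputable def excess {n : ℕ} (G : SimpleGraph (Fin n)) : ℕ :=
  ∑ B ∈ Finset.univ.filter (fun B : Finset (Fin n) => IsHomBlock G ↑B), (B.card - 2)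

/-- Two ordered graphs have the same type. -/
def SameType {n n' : ℕ} (G : SimpleGraph (Fin n)) (G' : SimpleGraph (Fin n')) : Prop :=
  ∃ (k : ℕ) (B : Fin k → Set (Fin n)) (B' : Fin k → Set (Fin n')),
    (∀ i, IsHomBlock G (B i)) ∧ (∀ C, IsHomBlock G C → ∃ i, C = B i) ∧
    (∀ i j : Fin k, i < j → ∀ x ∈ B i, ∀ y ∈ B j, x < y) ∧
    (∀ i, IsHomBlock G' (B' i)) ∧ (∀ C, IsHomBlock G' C → ∃ i, C = B' i) ∧
    (∀ i j : Fin k, i < j → ∀ x ∈ B' i, ∀ y ∈ B' j, x < y) ∧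
    (∀ i j : Fin k, (∀ u ∈ B i, ∀ v ∈ B j, u ≠ v → G.Adj u v) ↔
            (∀ u ∈ B' i, ∀ v ∈ B' j, u ≠ v → G'.Adj u v)) ∧
    (∀ i, (B i).ncard = 1 ↔ (B' i).ncard = 1)

/-- The shadow within types `∂_τ G`. -/
def typeShadow {n : ℕ} (G : SimpleGraph (Fin n)) : Set (SimpleGraph (Fin (n - 1))) :=
  {H ∈ shadow G | SameType H G}

/-- The shadow within types `∂_τ 𝒢` of a collection. -/
def typeShadowCol {n : ℕ} (𝒢 : Set (SimpleGraph (Fin n))) : Set (SimpleGraph (Fin (n - 1))) :=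
  ⋃ G ∈ 𝒢, typeShadow G

/-- `Z^d(n) = {x ∈ ℤ^d : x_i ≥ 0, Σ_i x_i = n}`. -/
def Zdn (d n : ℕ) : Set (Fin d → ℤ) := {x | (∀ i, 0 ≤ x i) ∧ ∑ i, x i = (n : ℤ)}

/-- A line in `Z^d(n)`, determined by two coordinates `j, k`. -/
def ZLine (d n : ℕ) (j k : Fin d) : Set (Fin d → ℤ) :=
  {x ∈ Zdn d n | ∀ i, i ≠ j → i ≠ k → x i = 0}

/-- The shadow of a subset `A ⊆ Z^d(n)`. -/
def Zshadow (d n : ℕ) (A : Set (Fin d → ℤ)) : Set (Fin d → ℤ) :=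
  {x ∈ Zdn d (n - 1) | ∃ y ∈ A, ∀ i, x i ≤ y i}

/-- `phiAt G d x` : `x ∈ ℤ^d` is the image `φ(G)` of `G`, i.e. the homogeneous blocks of `G`
of size at least `2`, in increasing order, are `B_1 < ⋯ < B_d` and `x i = |B_i| − 2`. -/
def phiAt {n : ℕ} (G : SimpleGraph (Fin n)) (d : ℕ) (x : Fin d → ℤ) : Prop :=
  ∃ B : Fin d → Set (Fin n),
    (∀ i, IsHomBlock G (B i) ∧ 2 ≤ (B i).ncard) ∧
    (∀ C, IsHomBlock G C → 2 ≤ C.ncard → ∃ i, C = B i) ∧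
    (∀ i j : Fin d, i < j → ∀ u ∈ B i, ∀ v ∈ B j, u < v) ∧
    (∀ i, x i = ((B i).ncard : ℤ) - 2)

/-- `𝒢₀` (a set of ordered graphs of a common type, of common excess `m`) contains a line:
some subset `S ⊆ 𝒢₀` has `φ(S)` equal to a line in `Z^d(m)`. -/
def ContainsLine {n : ℕ} (𝒢₀ : Set (SimpleGraph (Fin n))) (m : ℕ) : Prop :=
  ∃ S ⊆ 𝒢₀, ∃ (d : ℕ) (j k : Fin d),
    {x : Fin d → ℤ | ∃ G ∈ S, phiAt G d x} = ZLine d m j k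

/-- `eraseSet G X` is `G − X`: delete all vertices of `X` and relabel order-preservingly. -/
noncomputable def eraseSet {n : ℕ} (G : SimpleGraph (Fin n)) (X : Finset (Fin n)) :
    SimpleGraph (Fin (n - X.card)) where
  Adj i j := G.Adj ((Xᶜ.orderIsoOfFin (by rw [Finset.card_compl, Fintype.card_fin]) i) : Fin n)
                   ((Xᶜ.orderIsoOfFin (by rw [Finset.card_compl, Fintype.card_fin]) j) : Fin n)
  symm := ⟨fun i j h => G.adj_symm h⟩
  loopless := ⟨fun i h => G.irrefl h⟩

/-- A semi-homogeneous block: a set `B` of consecutive vertices such that all vertices of `B`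
have the same neighbourhood outside `B`, and, for some `L ⊆ ℕ`, two vertices `x, y ∈ B` are
adjacent iff `|x − y| ∈ L`. -/
def IsSemiHomBlock {n : ℕ} (G : SimpleGraph (Fin n)) (B : Set (Fin n)) : Prop :=
  B.OrdConnected ∧
  (∀ x ∈ B, ∀ y ∈ B, G.neighborSet x \ B = G.neighborSet y \ B) ∧
  ∃ L : Set ℕ, ∀ x ∈ B, ∀ y ∈ B, (G.Adj x y ↔ ((x : ℤ) - (y : ℤ)).natAbs ∈ L)


open Finset

variable {N : ℕ}

/-- pointwise version of simRel -/
def rel (K : SimpleGraph (Fin N)) (x y : Fin N) : Prop :=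
  ∀ w, w ≠ x → w ≠ y → (K.Adj x w ↔ K.Adj y w)

lemma simRel_iff_rel {K : SimpleGraph (Fin N)} {x y : Fin N} :
    simRel K x y ↔ rel K x y := by
  unfold simRel rel
  rw [Set.ext_iff]
  constructor
  · intro h w hwx hwy
    have hw := h w
    simp only [Set.mem_diff, SimpleGraph.mem_neighborSet, Set.mem_singleton_iff] at hw
    exact ⟨fun ha => (hw.1 ⟨ha, hwy⟩).1, fun ha => (hw.2 ⟨ha, hwx⟩).1⟩
  · intro h w
    simp only [Set.mem_diff, SimpleGraph.mem_neighborSet, Set.mem_singleton_iff]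
    by_cases hwx : w = x
    · subst hwx; simp [K.irrefl]
    by_cases hwy : w = y
    · subst hwy; simp [K.irrefl]
    · simp only [hwx, hwy, not_false_iff, and_true]
      exact h w hwx hwy

lemma rel_refl (K : SimpleGraph (Fin N)) (x : Fin N) : rel K x x := fun _ _ _ => Iff.rfl

lemma rel_symm {K : SimpleGraph (Fin N)} {x y : Fin N} (h : rel K x y) : rel K y x :=
  fun w hy hx => (h w hx hy).symm

lemma rel_trans {K : SimpleGraph (Fin N)} {x y z : Fin N}
    (h1 : rel K x y) (h2 : rel K y z) : rel K x z := by
  by_cases hxy : x = y; · subst hxy; exact h2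
  by_cases hyz : y = z; · subst hyz; exact h1
  by_cases hxz : x = z; · subst hxz; exact rel_refl K x
  intro w hwx hwz
  by_cases hwy : w = y
  · subst hwy
    calc K.Adj x w ↔ K.Adj w x := K.adj_comm x w
      _ ↔ K.Adj z x := h2 x hxy hxz
      _ ↔ K.Adj x z := K.adj_comm z x
      _ ↔ K.Adj w z := h1 z (fun e => hxz e.symm) (fun e => hyz e.symm)
      _ ↔ K.Adj z w := K.adj_comm w z
  · exact (h1 w hwx hwy).trans (h2 w hwy hwz)

/-- step at boundary j (vacuously true near the top) -/
def stp (K : SimpleGraph (Fin N)) (j : ℕ) : Prop :=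
  ∀ (h : j + 1 < N), rel K ⟨j, by omega⟩ ⟨j + 1, h⟩

open Classical in
/-- number of non-steps below j : the block index -/
noncomputable def fN (stq : ℕ → Prop) (j : ℕ) : ℕ :=
  ((Finset.range j).filter (fun i => ¬ stq i)).card

lemma fN_mono (stq : ℕ → Prop) {i j : ℕ} (h : i ≤ j) : fN stq i ≤ fN stq j := by
  classical
  unfold fN
  exact card_le_card (by
    apply filter_subset_filter
    exact range_subset_range.2 h)

open Classical in
lemma fN_add (stq : ℕ → Prop) {i j : ℕ} (h : i ≤ j) :
    fN stq j = fN stq i + ((Finset.Ico i j).filter (fun k => ¬ stq k)).card := by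
  unfold fN
  have hsplit : Finset.range j = Finset.range i ∪ Finset.Ico i j := by
    rw [range_eq_Ico, range_eq_Ico, Finset.Ico_union_Ico_eq_Ico (Nat.zero_le i) h]
  rw [hsplit, filter_union, card_union_of_disjoint]
  exact disjoint_filter_filter (by
    rw [range_eq_Ico]; exact Finset.Ico_disjoint_Ico_consecutive 0 i j)

lemma fN_eq_iff (stq : ℕ → Prop) {i j : ℕ} (h : i ≤ j) :
    fN stq i = fN stq j ↔ ∀ k, i ≤ k → k < j → stq k := by
  classical
  rw [fN_add stq h]
  constructor
  · intro he k hk1 hk2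
    by_contra hns
    have : ((Finset.Ico i j).filter (fun k => ¬ stq k)).Nonempty :=
      ⟨k, mem_filter.2 ⟨Finset.mem_Ico.2 ⟨hk1, hk2⟩, hns⟩⟩
    have := Finset.card_pos.2 this
    omega
  · intro hall
    have : ((Finset.Ico i j).filter (fun k => ¬ stq k)) = ∅ := by
      apply Finset.filter_eq_empty_iff.2
      intro k hk
      have := Finset.mem_Ico.1 hk
      exact not_not_intro (hall k this.1 this.2)
    rw [this]; simp

lemma fN_eq2 (stq : ℕ → Prop) (j : ℕ) :
    fN stq j = fN stq (j + 2) ↔ stq j ∧ stq (j + 1) := by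
  rw [fN_eq_iff stq (by omega)]
  constructor
  · intro h; exact ⟨h j (le_refl _) (by omega), h (j+1) (by omega) (by omega)⟩
  · rintro ⟨h1, h2⟩ k hk1 hk2
    have : k = j ∨ k = j + 1 := by omega
    rcases this with rfl | rfl
    · exact h1
    · exact h2

/-- fibers of fN on range N are intervals -/
lemma fN_fiber_Ico (stq : ℕ → Prop) {k : ℕ}
    (hk : k ∈ (Finset.range N).image (fN stq)) :
    ∃ a b, a ≤ b ∧ b ≤ N ∧
      ((Finset.range N).filter (fun j => fN stq j = k)) = Finset.Ico a b := by
  classical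
  set S := (Finset.range N).filter (fun j => fN stq j = k) with hS
  have hne : S.Nonempty := by
    obtain ⟨j, hj, hjk⟩ := Finset.mem_image.1 hk
    exact ⟨j, mem_filter.2 ⟨hj, hjk⟩⟩
  refine ⟨S.min' hne, S.max' hne + 1, ?_, ?_, ?_⟩
  · have := S.min'_le _ (S.max'_mem hne); omega
  · have h2 := Finset.mem_range.1 (mem_of_mem_filter _ (S.max'_mem hne))
    omega
  · ext j
    simp only [Finset.mem_Ico]
    constructor
    · intro hj
      exact ⟨S.min'_le _ hj, by have := S.le_max' _ hj; omega⟩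
    · rintro ⟨h1, h2⟩
      have hmin := mem_filter.1 (S.min'_mem hne)
      have hmax := mem_filter.1 (S.max'_mem hne)
      have hjN : j < N := by
        have := Finset.mem_range.1 hmax.1; omega
      refine mem_filter.2 ⟨Finset.mem_range.2 hjN, ?_⟩
      have l1 := fN_mono stq h1
      have l2 := fN_mono stq (show j ≤ S.max' hne by omega)
      omega

/-- the per-fiber doublestep count -/
lemma fiber_doublestep (stq : ℕ → Prop) {k : ℕ}
    (hk : k ∈ (Finset.range N).image (fN stq)) :
    (((Finset.range (N - 2)).filter (fun j => fN stq j = fN stq (j + 2))).filter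
        (fun j => fN stq j = k)).card
      = ((Finset.range N).filter (fun j => fN stq j = k)).card - 2 := by
  classical
  obtain ⟨a, b, hab, hbN, hIco⟩ := fN_fiber_Ico stq hk
  have hmem : ∀ j, (fN stq j = k ∧ j < N) ↔ (a ≤ j ∧ j < b) := by
    intro j
    constructor
    · intro ⟨h1, h2⟩
      have : j ∈ Finset.Ico a b := by
        rw [← hIco]; exact mem_filter.2 ⟨Finset.mem_range.2 h2, h1⟩
      exact Finset.mem_Ico.1 this
    · intro h
      have : j ∈ (Finset.range N).filter (fun j => fN stq j = k) := by
        rw [hIco]; exact Finset.mem_Ico.2 h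
      have := mem_filter.1 this
      exact ⟨this.2, Finset.mem_range.1 this.1⟩
  rw [hIco, Nat.card_Ico]
  have : (((Finset.range (N - 2)).filter (fun j => fN stq j = fN stq (j + 2))).filter
      (fun j => fN stq j = k)) = Finset.Ico a (b - 2) := by
    ext j
    simp only [Finset.mem_Ico, mem_filter, Finset.mem_range]
    constructor
    · rintro ⟨⟨hj1, hj2⟩, hj3⟩
      have e1 := (hmem j).1 ⟨hj3, by omega⟩
      have e2 := (hmem (j+2)).1 ⟨by omega, by omega⟩
      omega
    · rintro ⟨h1, h2⟩
      have e1 := (hmem j).2 ⟨h1, by omega⟩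
      have e2 := (hmem (j+2)).2 ⟨by omega, by omega⟩
      refine ⟨⟨?_, ?_⟩, ?_⟩ <;> omega
  rw [this, Nat.card_Ico]
  omega

/-- abstract sum formula -/
lemma sum_fiber_eq (stq : ℕ → Prop) :
    ∑ k ∈ (Finset.range N).image (fN stq),
        (((Finset.range N).filter (fun j => fN stq j = k)).card - 2)
      = ((Finset.range (N - 2)).filter (fun j => fN stq j = fN stq (j + 2))).card := by
  classical
  rw [Finset.card_eq_sum_card_fiberwise
    (f := fun j => fN stq j) (t := (Finset.range N).image (fN stq))
    (fun x hx => Finset.mem_image_of_mem _ (by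
      have := Finset.mem_range.1 (mem_of_mem_filter _ hx); exact Finset.mem_range.2 (by omega)))]
  refine Finset.sum_congr rfl (fun k hk => ?_)
  exact (fiber_doublestep stq hk).symm


-- ### new material

lemma card_filter_val (p : ℕ → Prop) [DecidablePred p] :
    (Finset.univ.filter (fun y : Fin N => p (y : ℕ))).card
      = ((Finset.range N).filter p).card := by
  refine Finset.card_bij (fun (a : Fin N) _ => (a : ℕ)) ?_ ?_ ?_
  · intro a ha
    exact mem_filter.2 ⟨Finset.mem_range.2 a.isLt, (mem_filter.1 ha).2⟩
  · intro a _ b _ h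
    exact Fin.ext h
  · intro b hb
    have hb' := mem_filter.1 hb
    exact ⟨⟨b, Finset.mem_range.1 hb'.1⟩, mem_filter.2 ⟨mem_univ _, hb'.2⟩, rfl⟩

variable (K : SimpleGraph (Fin N))

lemma rel_of_chain_aux (x : Fin N) :
    ∀ d (y : Fin N), (y : ℕ) = (x : ℕ) + d →
      (∀ k, (x : ℕ) ≤ k → k < (y : ℕ) → stp K k) → rel K x y := by
  intro d
  induction d with
  | zero =>
    intro y hy _
    have : x = y := Fin.ext (by omega)
    subst this; exact rel_refl K x
  | succ d ih =>
    intro y hy hch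
    have hyN := y.isLt
    have h2 : rel K (⟨(x : ℕ) + d, by omega⟩ : Fin N) y := by
      have hst := hch ((x : ℕ) + d) (by omega) (by omega) (by omega)
      have hfy : (⟨(x : ℕ) + d + 1, by omega⟩ : Fin N) = y :=
        Fin.ext (by show (x : ℕ) + d + 1 = (y : ℕ); omega)
      rwa [hfy] at hst
    exact rel_trans (ih ⟨(x : ℕ) + d, by omega⟩ rfl
      (fun k hk1 hk2 => hch k hk1 (by
        have hk2' : k < (x : ℕ) + d := hk2; omega))) h2

lemma rel_of_chain {x y : Fin N} (hxy : (x : ℕ) ≤ y)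
    (h : ∀ k, (x : ℕ) ≤ k → k < (y : ℕ) → stp K k) : rel K x y :=
  rel_of_chain_aux K x ((y : ℕ) - (x : ℕ)) y (by omega) h

lemma rel_of_fN_eq {x y : Fin N} (hxy : (x : ℕ) ≤ y)
    (h : fN (stp K) x = fN (stp K) y) : rel K x y :=
  rel_of_chain K hxy ((fN_eq_iff _ hxy).1 h)

noncomputable def BlkV (k : ℕ) : Finset (Fin N) :=
  Finset.univ.filter (fun y => fN (stp K) (y : ℕ) = k)

lemma mem_BlkV {k : ℕ} {y : Fin N} : y ∈ BlkV K k ↔ fN (stp K) (y : ℕ) = k := by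
  simp [BlkV]

lemma card_BlkV (k : ℕ) :
    (BlkV K k).card = ((Finset.range N).filter (fun j => fN (stp K) j = k)).card := by
  classical
  exact card_filter_val (fun j => fN (stp K) j = k)

/-- inside a hom interval the block index is constant -/
lemma fN_eq_of_homInterval {C : Set (Fin N)} (hC : IsHomInterval K C)
    {u w : Fin N} (hu : u ∈ C) (hw : w ∈ C) (hle : (u : ℕ) ≤ w) :
    fN (stp K) u = fN (stp K) w := by
  rw [fN_eq_iff _ hle]
  intro j hj1 hj2
  intro hjN
  have hwN := w.isLt
  have m1 : (⟨j, by omega⟩ : Fin N) ∈ C := by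
    apply hC.1.out hu hw
    constructor <;> · rw [Fin.le_def]; simp; omega
  have m2 : (⟨j + 1, hjN⟩ : Fin N) ∈ C := by
    apply hC.1.out hu hw
    constructor <;> · rw [Fin.le_def]; simp; omega
  exact simRel_iff_rel.1 (hC.2 _ m1 _ m2)

lemma blkV_isHomInterval (k : ℕ) : IsHomInterval K ↑(BlkV K k) := by
  constructor
  · constructor
    intro x hx y hy z hz
    simp only [Finset.coe_filter, Set.mem_setOf_eq, BlkV, mem_univ, true_and] at hx hy ⊢
    have h1 := fN_mono (stp K) (show (x : ℕ) ≤ z from hz.1)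
    have h2 := fN_mono (stp K) (show (z : ℕ) ≤ y from hz.2)
    omega
  · intro x hx y hy
    simp only [Finset.coe_filter, Set.mem_setOf_eq, BlkV, mem_univ, true_and] at hx hy
    rw [simRel_iff_rel]
    rcases le_total (x : ℕ) (y : ℕ) with h | h
    · exact rel_of_fN_eq K h (by omega)
    · exact rel_symm (rel_of_fN_eq K h (by omega))

lemma blkV_isHomBlock {k : ℕ} (hk : k ∈ (Finset.range N).image (fN (stp K))) :
    IsHomBlock K ↑(BlkV K k) := by
  obtain ⟨j, hj, hjk⟩ := Finset.mem_image.1 hk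
  have hjN := Finset.mem_range.1 hj
  have hx0 : (⟨j, hjN⟩ : Fin N) ∈ BlkV K k := mem_BlkV K |>.2 hjk
  refine ⟨⟨⟨j, hjN⟩, hx0⟩, blkV_isHomInterval K k, ?_⟩
  intro C hC hsub
  apply Set.Subset.antisymm hsub
  intro z hz
  have hzk : fN (stp K) (z : ℕ) = k := by
    rcases le_total ((⟨j, hjN⟩ : Fin N) : ℕ) (z : ℕ) with h | h
    · rw [← fN_eq_of_homInterval K hC (hsub hx0) hz h]; exact hjk
    · rw [fN_eq_of_homInterval K hC hz (hsub hx0) h]; exact hjk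
  exact mem_BlkV K |>.2 hzk

lemma isHomBlock_iff (B : Finset (Fin N)) :
    IsHomBlock K ↑B ↔ ∃ k ∈ (Finset.range N).image (fN (stp K)), B = BlkV K k := by
  constructor
  · rintro ⟨hne, hint, hmax⟩
    obtain ⟨x, hx⟩ := hne
    have hxB : x ∈ B := hx
    refine ⟨fN (stp K) (x : ℕ), Finset.mem_image.2 ⟨(x : ℕ), Finset.mem_range.2 x.isLt, rfl⟩, ?_⟩
    have hsub : ↑B ⊆ ↑(BlkV K (fN (stp K) (x : ℕ))) := by
      intro y hy
      have : fN (stp K) (y : ℕ) = fN (stp K) (x : ℕ) := by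
        rcases le_total (y : ℕ) (x : ℕ) with h | h
        · exact fN_eq_of_homInterval K hint hy hx h
        · exact (fN_eq_of_homInterval K hint hx hy h).symm
      exact mem_BlkV K |>.2 this
    have := hmax _ (blkV_isHomInterval K _) hsub
    exact Finset.coe_injective this
  · rintro ⟨k, hk, rfl⟩
    exact blkV_isHomBlock K hk

lemma excess_eq_sum :
    excess K = ∑ k ∈ (Finset.range N).image (fN (stp K)), ((BlkV K k).card - 2) := by
  classical
  have h1 : (Finset.univ.filter (fun B : Finset (Fin N) => IsHomBlock K ↑B))
      = ((Finset.range N).image (fN (stp K))).image (BlkV K) := by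
    ext B
    simp only [Finset.mem_filter, Finset.mem_univ, true_and,
      Finset.mem_image (s := ((Finset.range N).image (fN (stp K))))]
    rw [isHomBlock_iff]
    constructor
    · rintro ⟨k, hk, rfl⟩; exact ⟨k, hk, rfl⟩
    · rintro ⟨k, hk, rfl⟩; exact ⟨k, hk, rfl⟩
  have h2 : excess K = ∑ B ∈ (Finset.univ.filter
      (fun B : Finset (Fin N) => IsHomBlock K ↑B)), (B.card - 2) := by
    unfold excess
    apply Finset.sum_congr _ (fun _ _ => rfl)
    apply Finset.filter_congr_decidable
  rw [h2, h1, Finset.sum_image]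
  intro k1 hk1 k2 hk2 he
  obtain ⟨j, hj, hjk⟩ := Finset.mem_image.1 hk1
  have hjN := Finset.mem_range.1 hj
  have m1 : (⟨j, hjN⟩ : Fin N) ∈ BlkV K k1 := mem_BlkV K |>.2 hjk
  rw [he] at m1
  have h3 : fN (stp K) j = k2 := mem_BlkV K |>.1 m1
  omega

lemma excess_eq :
    excess K = ((Finset.range (N - 2)).filter
      (fun j => fN (stp K) j = fN (stp K) (j + 2))).card := by
  classical
  rw [excess_eq_sum, ← sum_fiber_eq (stq := stp K)]
  exact Finset.sum_congr rfl (fun k _ => by rw [card_BlkV])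


section EraseAnalysis

variable {n : ℕ} (G : SimpleGraph (Fin n))

/-- `rel` except possibly at `v` -/
def relE (v x y : Fin n) : Prop :=
  ∀ w, w ≠ x → w ≠ y → w ≠ v → (G.Adj x w ↔ G.Adj y w)

lemma delMap_val_lt {v : Fin n} {i : Fin (n - 1)} (h : (i : ℕ) < (v : ℕ)) :
    ((delMap v i : Fin n) : ℕ) = (i : ℕ) := by
  unfold delMap; rw [dif_pos h]

lemma delMap_val_ge {v : Fin n} {i : Fin (n - 1)} (h : ¬ (i : ℕ) < (v : ℕ)) :
    ((delMap v i : Fin n) : ℕ) = (i : ℕ) + 1 := by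
  unfold delMap; rw [dif_neg h]

lemma delMap_val (v : Fin n) (i : Fin (n - 1)) :
    ((delMap v i : Fin n) : ℕ) = if (i : ℕ) < (v : ℕ) then (i : ℕ) else (i : ℕ) + 1 := by
  by_cases h : (i : ℕ) < (v : ℕ)
  · rw [delMap_val_lt h, if_pos h]
  · rw [delMap_val_ge h, if_neg h]

lemma delMap_inj {v : Fin n} {i j : Fin (n - 1)} (h : delMap v i = delMap v j) : i = j := by
  have hv := congrArg Fin.val h
  rw [delMap_val, delMap_val] at hv
  apply Fin.ext
  split at hv <;> split at hv <;> omega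

lemma delMap_ne {v : Fin n} (i : Fin (n - 1)) : delMap v i ≠ v := by
  intro h
  have hv := congrArg Fin.val h
  rw [delMap_val] at hv
  split at hv <;> omega

lemma delMap_surj {v w : Fin n} (hw : w ≠ v) : ∃ i, delMap v i = w := by
  have hvn := v.isLt; have hwn := w.isLt
  have hne : (w : ℕ) ≠ (v : ℕ) := fun e => hw (Fin.ext e)
  by_cases h : (w : ℕ) < (v : ℕ)
  · have hb : (w : ℕ) < n - 1 := by omega
    refine ⟨⟨(w : ℕ), hb⟩, Fin.ext ?_⟩
    rw [delMap_val_lt (show ((⟨(w : ℕ), hb⟩ : Fin (n - 1)) : ℕ) < (v : ℕ) from h)]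
  · have hb : (w : ℕ) - 1 < n - 1 := by omega
    refine ⟨⟨(w : ℕ) - 1, hb⟩, Fin.ext ?_⟩
    rw [delMap_val_ge (show ¬ ((⟨(w : ℕ) - 1, hb⟩ : Fin (n - 1)) : ℕ) < (v : ℕ) by
      show ¬ (w : ℕ) - 1 < (v : ℕ); omega)]
    show (w : ℕ) - 1 + 1 = (w : ℕ); omega

lemma rel_erase_iff (v : Fin n) (x y : Fin (n - 1)) :
    rel (erase G v) x y ↔ relE G v (delMap v x) (delMap v y) := by
  constructor
  · intro h w hwx hwy hwv
    obtain ⟨i, rfl⟩ := delMap_surj hwv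
    exact h i (fun e => hwx (congrArg (delMap v) e)) (fun e => hwy (congrArg (delMap v) e))
  · intro h w hwx hwy
    exact h (delMap v w) (fun e => hwx (delMap_inj e)) (fun e => hwy (delMap_inj e))
      (delMap_ne w)

/-- step except at `v` -/
def sE (v : Fin n) (j : ℕ) : Prop :=
  ∀ (h : j + 1 < n), relE G v ⟨j, by omega⟩ ⟨j + 1, h⟩

lemma sE_of_stp {v : Fin n} {j : ℕ} (h : stp G j) : sE G v j :=
  fun hj w h1 h2 _ => h hj w h1 h2

open Classical in
noncomputable def Mset (v : Fin n) : Finset ℕ :=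
  (Finset.range (n - 1)).filter (fun j => ¬ stp G j ∧ sE G v j)

lemma stp_erase_low {v : Fin n} {p : ℕ} (hp : p + 1 < n - 1) (hv : p + 1 < (v : ℕ))
    (h : stp (erase G v) p) : sE G v p := by
  intro h1
  have h2 := (rel_erase_iff G v ⟨p, by omega⟩ ⟨p + 1, hp⟩).1 (h hp)
  have e1 : delMap v (⟨p, by omega⟩ : Fin (n - 1)) = (⟨p, by omega⟩ : Fin n) :=
    Fin.ext (by rw [delMap_val_lt (show (p : ℕ) < (v : ℕ) by omega)])
  have e2 : delMap v (⟨p + 1, hp⟩ : Fin (n - 1)) = (⟨p + 1, h1⟩ : Fin n) :=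
    Fin.ext (by rw [delMap_val_lt (show ((⟨p + 1, hp⟩ : Fin (n-1)) : ℕ) < (v : ℕ) from hv)])
  rwa [e1, e2] at h2

lemma stp_erase_high {v : Fin n} {p : ℕ} (hp : p + 1 < n - 1) (hv : (v : ℕ) ≤ p)
    (h : stp (erase G v) p) : sE G v (p + 1) := by
  intro h1
  have h2 := (rel_erase_iff G v ⟨p, by omega⟩ ⟨p + 1, hp⟩).1 (h hp)
  have e1 : delMap v (⟨p, by omega⟩ : Fin (n - 1)) = (⟨p + 1, by omega⟩ : Fin n) :=
    Fin.ext (by rw [delMap_val_ge (show ¬ (p : ℕ) < (v : ℕ) by show ¬ p < (v:ℕ); omega)])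
  have e2 : delMap v (⟨p + 1, hp⟩ : Fin (n - 1)) = (⟨p + 2, h1⟩ : Fin n) :=
    Fin.ext (by rw [delMap_val_ge (show ¬ ((⟨p + 1, hp⟩ : Fin (n-1)) : ℕ) < (v : ℕ) by
      show ¬ p + 1 < (v:ℕ); omega)])
  rwa [e1, e2] at h2

lemma excess_erase_le (v : Fin n) :
    excess (erase G v) ≤ excess G + 2 * (Mset G v).card + 2 := by
  classical
  rw [excess_eq, excess_eq]
  set H := erase G v with hH
  set TH := (Finset.range (n - 1 - 2)).filter
    (fun p => fN (stp H) p = fN (stp H) (p + 2)) with hTH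
  set TE := (Finset.range (n - 2)).filter (fun j => sE G v j ∧ sE G v (j + 1)) with hTE
  set TG := (Finset.range (n - 2)).filter
    (fun j => fN (stp G) j = fN (stp G) (j + 2)) with hTG
  have step1 : TH.card ≤ TE.card + 2 := by
    have hsplit := Finset.card_filter_add_card_filter_not
      (s := TH) (p := fun p => p + 2 < (v : ℕ) ∨ (v : ℕ) ≤ p)
    have hmid : (TH.filter (fun p => ¬ (p + 2 < (v : ℕ) ∨ (v : ℕ) ≤ p))).card ≤ 2 := by
      have hsub : TH.filter (fun p => ¬ (p + 2 < (v : ℕ) ∨ (v : ℕ) ≤ p))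
          ⊆ ({(v : ℕ) - 2, (v : ℕ) - 1} : Finset ℕ) := by
        intro p hp
        have hc := (Finset.mem_filter.1 hp).2
        have : p = (v : ℕ) - 2 ∨ p = (v : ℕ) - 1 := by omega
        simp only [Finset.mem_insert, Finset.mem_singleton]
        exact this
      calc (TH.filter (fun p => ¬ (p + 2 < (v : ℕ) ∨ (v : ℕ) ≤ p))).card
          ≤ ({(v : ℕ) - 2, (v : ℕ) - 1} : Finset ℕ).card := Finset.card_le_card hsub
        _ ≤ 2 := by
            apply le_trans (Finset.card_insert_le _ _)
            simp
    have hmap : (TH.filter (fun p => p + 2 < (v : ℕ) ∨ (v : ℕ) ≤ p)).card ≤ TE.card := by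
      apply Finset.card_le_card_of_injOn (fun p => if p + 2 < (v : ℕ) then p else p + 1)
      · intro p hp
        obtain ⟨hpTH, hcase⟩ := Finset.mem_filter.1 hp
        obtain ⟨hpr, hpf⟩ := Finset.mem_filter.1 hpTH
        have hpn : p < n - 1 - 2 := Finset.mem_range.1 hpr
        have hdd := (fN_eq2 (stp H) p).1 hpf
        rcases hcase with hlow | hhigh
        · beta_reduce
          rw [if_pos hlow]
          refine Finset.mem_filter.2 ⟨Finset.mem_range.2 (by omega), ?_, ?_⟩
          · exact stp_erase_low G (by omega) (by omega) hdd.1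
          · exact stp_erase_low G (by omega) (by omega) hdd.2
        · have hge : (v : ℕ) ≤ p := by omega
          beta_reduce
          rw [if_neg (by omega)]
          refine Finset.mem_filter.2 ⟨Finset.mem_range.2 (by omega), ?_, ?_⟩
          · exact stp_erase_high G (by omega) hge hdd.1
          · exact stp_erase_high G (by omega) (by omega) hdd.2
      · intro p1 h1 p2 h2 he
        have hc1 := (Finset.mem_filter.1 h1).2
        have hc2 := (Finset.mem_filter.1 h2).2
        by_cases d1 : p1 + 2 < (v : ℕ) <;> by_cases d2 : p2 + 2 < (v : ℕ) <;>
          simp only [if_pos, if_neg, d1, d2, if_true, if_false] at he <;> omega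
    omega
  have step2 : TE.card ≤ TG.card + 2 * (Mset G v).card := by
    have hsplit := Finset.card_filter_add_card_filter_not
      (s := TE) (p := fun j => fN (stp G) j = fN (stp G) (j + 2))
    have h1 : (TE.filter (fun j => fN (stp G) j = fN (stp G) (j + 2))).card ≤ TG.card := by
      apply Finset.card_le_card
      intro j hj
      obtain ⟨hjTE, hjc⟩ := Finset.mem_filter.1 hj
      exact Finset.mem_filter.2 ⟨(Finset.mem_filter.1 hjTE).1, hjc⟩
    have h2 : (TE.filter (fun j => ¬ (fN (stp G) j = fN (stp G) (j + 2)))).card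
        ≤ 2 * (Mset G v).card := by
      set B := TE.filter (fun j => ¬ (fN (stp G) j = fN (stp G) (j + 2))) with hB
      have hBsplit := Finset.card_filter_add_card_filter_not
        (s := B) (p := fun j => ¬ stp G j)
      have hB1 : (B.filter (fun j => ¬ stp G j)).card ≤ (Mset G v).card := by
        apply Finset.card_le_card
        intro j hj
        obtain ⟨hjB, hjc⟩ := Finset.mem_filter.1 hj
        obtain ⟨hjTE, _⟩ := Finset.mem_filter.1 hjB
        obtain ⟨hjr, hjse⟩ := Finset.mem_filter.1 hjTE
        have := Finset.mem_range.1 hjr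
        exact Finset.mem_filter.2 ⟨Finset.mem_range.2 (by omega), hjc, hjse.1⟩
      have hB2 : (B.filter (fun j => ¬ ¬ stp G j)).card ≤ (Mset G v).card := by
        apply Finset.card_le_card_of_injOn (fun j => j + 1)
        · intro j hj
          obtain ⟨hjB, hjc⟩ := Finset.mem_filter.1 hj
          obtain ⟨hjTE, hjne⟩ := Finset.mem_filter.1 hjB
          obtain ⟨hjr, hjse⟩ := Finset.mem_filter.1 hjTE
          have hjn := Finset.mem_range.1 hjr
          have hstj : stp G j := not_not.1 hjc
          have hnst : ¬ stp G (j + 1) := by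
            intro hc
            exact hjne ((fN_eq2 (stp G) j).2 ⟨hstj, hc⟩)
          beta_reduce
          exact Finset.mem_filter.2 ⟨Finset.mem_range.2 (by omega), hnst, hjse.2⟩
        · intro a _ b _ he
          have hab : a + 1 = b + 1 := he
          omega
      omega
    omega
  omega

lemma M_unique {v w : Fin n} {j : ℕ} (hv : j ∈ Mset G v) (hw : j ∈ Mset G w) : v = w := by
  classical
  obtain ⟨hjr, hnst, hsev⟩ := Finset.mem_filter.1 hv
  obtain ⟨_, hc⟩ := Finset.mem_filter.1 hw
  by_contra hne
  apply hnst
  intro h u hu1 hu2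
  by_cases huv : u = v
  · exact hc.2 h u hu1 hu2 (fun e => hne (by rw [← huv, e]))
  · exact hsev h u hu1 hu2 huv

lemma sum_M_le : ∑ v : Fin n, (Mset G v).card ≤ n - 1 := by
  classical
  rw [← Finset.card_sigma]
  have h := Finset.card_le_card_of_injOn (s := (Finset.univ : Finset (Fin n)).sigma
      (fun v => Mset G v)) (t := Finset.range (n - 1)) (fun x => x.2) ?_ ?_
  · simpa using h
  · intro x hx
    have := (Finset.mem_sigma.1 hx).2
    exact Finset.mem_range.2 (Finset.mem_range.1 (Finset.mem_filter.1 this).1)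
  · rintro ⟨v1, j1⟩ hx ⟨v2, j2⟩ hy he
    simp only at he
    subst he
    have m1 := (Finset.mem_sigma.1 hx).2
    have m2 := (Finset.mem_sigma.1 hy).2
    have : v1 = v2 := M_unique G m1 m2
    subst this; rfl

end EraseAnalysis

section FiberAnalysis

variable {n : ℕ} (G : SimpleGraph (Fin n))

lemma erase_eq_of_stp {j : ℕ} (hj : j + 1 < n) (hst : stp G j) :
    erase G ⟨j, by omega⟩ = erase G ⟨j + 1, hj⟩ := by
  set vj : Fin n := ⟨j, by omega⟩ with hvj
  set vj1 : Fin n := ⟨j + 1, hj⟩ with hvj1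
  have hrel := hst hj
  have hval : ∀ i : Fin (n - 1), (i : ℕ) ≠ j → delMap vj i = delMap vj1 i := by
    intro i hne
    apply Fin.ext
    rw [delMap_val, delMap_val]
    show (if (i : ℕ) < j then (i : ℕ) else (i : ℕ) + 1)
      = (if (i : ℕ) < j + 1 then (i : ℕ) else (i : ℕ) + 1)
    split <;> split <;> omega
  have hj1 : ∀ i : Fin (n - 1), (i : ℕ) = j → delMap vj i = vj1 ∧ delMap vj1 i = vj := by
    intro i he
    constructor <;> apply Fin.ext
    · rw [delMap_val_ge (show ¬ (i : ℕ) < (vj : ℕ) by show ¬ (i:ℕ) < j; omega)]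
      show (i : ℕ) + 1 = j + 1; omega
    · rw [delMap_val_lt (show (i : ℕ) < (vj1 : ℕ) by show (i:ℕ) < j + 1; omega)]
      exact he
  have hwne : ∀ i : Fin (n - 1), (i : ℕ) ≠ j → delMap vj1 i ≠ vj ∧ delMap vj1 i ≠ vj1 := by
    intro i hne
    constructor <;> intro e <;> have hv := congrArg Fin.val e <;>
      rw [delMap_val] at hv <;> revert hv
    · show (if (i:ℕ) < j + 1 then (i:ℕ) else (i:ℕ) + 1) = j → False
      split <;> omega
    · show (if (i:ℕ) < j + 1 then (i:ℕ) else (i:ℕ) + 1) = j + 1 → False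
      split <;> omega
  ext i k
  show G.Adj (delMap vj i) (delMap vj k) ↔ G.Adj (delMap vj1 i) (delMap vj1 k)
  by_cases hik : (i : ℕ) = j <;> by_cases hkk : (k : ℕ) = j
  · have : i = k := Fin.ext (by omega)
    subst this
    constructor <;> intro hadj <;> exact absurd hadj (G.irrefl)
  · rw [(hj1 i hik).1, (hj1 i hik).2, hval k hkk]
    exact (hrel _ (hwne k hkk).1 (hwne k hkk).2).symm
  · rw [(hj1 k hkk).1, (hj1 k hkk).2, hval i hik]
    rw [G.adj_comm _ vj1, G.adj_comm _ vj]
    exact (hrel _ (hwne i hik).1 (hwne i hik).2).symm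
  · rw [hval i hik, hval k hkk]

lemma erase_eq_of_chain : ∀ (d : ℕ) (x y : Fin n), (y : ℕ) = (x : ℕ) + d →
    (∀ k, (x : ℕ) ≤ k → k < (y : ℕ) → stp G k) → erase G x = erase G y := by
  intro d
  induction d with
  | zero =>
    intro x y hy _
    have : x = y := Fin.ext (by omega)
    rw [this]
  | succ d ih =>
    intro x y hy hch
    have hyN := y.isLt
    have hstep : erase G (⟨(x : ℕ) + d, by omega⟩ : Fin n) = erase G y := by
      have h2 := erase_eq_of_stp G (show (x:ℕ) + d + 1 < n by omega)
        (hch ((x : ℕ) + d) (by omega) (by omega))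
      have hfy : (⟨(x : ℕ) + d + 1, by omega⟩ : Fin n) = y :=
        Fin.ext (by show (x : ℕ) + d + 1 = (y : ℕ); omega)
      rwa [hfy] at h2
    exact (ih x ⟨(x : ℕ) + d, by omega⟩ rfl
      (fun k hk1 hk2 => hch k hk1 (by
        have hk2' : k < (x : ℕ) + d := hk2; omega))).trans hstep

lemma erase_eq_of_fN_eq {x y : Fin n} (h : fN (stp G) (x : ℕ) = fN (stp G) (y : ℕ)) :
    erase G x = erase G y := by
  rcases le_total (x : ℕ) (y : ℕ) with hle | hle
  · exact erase_eq_of_chain G ((y:ℕ) - (x:ℕ)) x y (by omega) ((fN_eq_iff _ hle).1 h)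
  · exact (erase_eq_of_chain G ((x:ℕ) - (y:ℕ)) y x (by omega)
      ((fN_eq_iff _ hle).1 h.symm)).symm

/-- F1 : shift-invariance outside the interval -/
lemma erase_shift_out {a b : Fin n} (hab : (a : ℕ) < b) (h : erase G a = erase G b)
    (u w : ℕ) (hu1 : (a : ℕ) ≤ u) (hu2 : u < (b : ℕ))
    (hw : w < (a : ℕ) ∨ ((b : ℕ) < w ∧ w < n)) (hun : u + 1 < n) (hwn : w < n) :
    (G.Adj ⟨u, by omega⟩ ⟨w, hwn⟩ ↔ G.Adj ⟨u + 1, hun⟩ ⟨w, hwn⟩) := by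
  have hbn := b.isLt
  have hAdj : ∀ i j : Fin (n-1), (erase G a).Adj i j ↔ (erase G b).Adj i j := by
    intro i j; rw [h]
  have hun1 : u < n - 1 := by omega
  have e1 : delMap a (⟨u, hun1⟩ : Fin (n-1)) = (⟨u + 1, hun⟩ : Fin n) :=
    Fin.ext (by rw [delMap_val_ge (show ¬ ((⟨u, hun1⟩ : Fin (n-1)) : ℕ) < (a : ℕ) by
      show ¬ u < (a:ℕ); omega)])
  have e2 : delMap b (⟨u, hun1⟩ : Fin (n-1)) = (⟨u, by omega⟩ : Fin n) :=
    Fin.ext (by rw [delMap_val_lt (show ((⟨u, hun1⟩ : Fin (n-1)) : ℕ) < (b : ℕ) from hu2)])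
  rcases hw with hwa | hwb
  · have hwn1 : w < n - 1 := by omega
    have e3 : delMap a (⟨w, hwn1⟩ : Fin (n-1)) = (⟨w, hwn⟩ : Fin n) :=
      Fin.ext (by rw [delMap_val_lt (show ((⟨w, hwn1⟩ : Fin (n-1)) : ℕ) < (a : ℕ) from hwa)])
    have e4 : delMap b (⟨w, hwn1⟩ : Fin (n-1)) = (⟨w, hwn⟩ : Fin n) :=
      Fin.ext (by rw [delMap_val_lt (show ((⟨w, hwn1⟩ : Fin (n-1)) : ℕ) < (b : ℕ) by
        show w < (b:ℕ); omega)])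
    have := hAdj ⟨u, hun1⟩ ⟨w, hwn1⟩
    rw [show (erase G a).Adj ⟨u, hun1⟩ ⟨w, hwn1⟩
        = G.Adj (delMap a ⟨u, hun1⟩) (delMap a ⟨w, hwn1⟩) from rfl,
      show (erase G b).Adj ⟨u, hun1⟩ ⟨w, hwn1⟩
        = G.Adj (delMap b ⟨u, hun1⟩) (delMap b ⟨w, hwn1⟩) from rfl,
      e1, e2, e3, e4] at this
    exact this.symm
  · have hwn1 : w - 1 < n - 1 := by omega
    have e3 : delMap a (⟨w - 1, hwn1⟩ : Fin (n-1)) = (⟨w, hwn⟩ : Fin n) :=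
      Fin.ext (by
        rw [delMap_val_ge (show ¬ ((⟨w - 1, hwn1⟩ : Fin (n-1)) : ℕ) < (a : ℕ) by
          show ¬ w - 1 < (a:ℕ); omega)]
        show w - 1 + 1 = w; omega)
    have e4 : delMap b (⟨w - 1, hwn1⟩ : Fin (n-1)) = (⟨w, hwn⟩ : Fin n) :=
      Fin.ext (by
        rw [delMap_val_ge (show ¬ ((⟨w - 1, hwn1⟩ : Fin (n-1)) : ℕ) < (b : ℕ) by
          show ¬ w - 1 < (b:ℕ); omega)]
        show w - 1 + 1 = w; omega)
    have := hAdj ⟨u, hun1⟩ ⟨w - 1, hwn1⟩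
    rw [show (erase G a).Adj ⟨u, hun1⟩ ⟨w - 1, hwn1⟩
        = G.Adj (delMap a ⟨u, hun1⟩) (delMap a ⟨w - 1, hwn1⟩) from rfl,
      show (erase G b).Adj ⟨u, hun1⟩ ⟨w - 1, hwn1⟩
        = G.Adj (delMap b ⟨u, hun1⟩) (delMap b ⟨w - 1, hwn1⟩) from rfl,
      e1, e2, e3, e4] at this
    exact this.symm

/-- F2 : diagonal shift-invariance inside the interval -/
lemma erase_shift_diag {a b : Fin n} (hab : (a : ℕ) < b) (h : erase G a = erase G b)
    (u t : ℕ) (hu1 : (a : ℕ) ≤ u) (hu2 : u < (b : ℕ)) (ht1 : (a : ℕ) ≤ t) (ht2 : t < (b : ℕ))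
    (hun : u + 1 < n) (htn : t + 1 < n) :
    (G.Adj ⟨u, by omega⟩ ⟨t, by omega⟩ ↔ G.Adj ⟨u + 1, hun⟩ ⟨t + 1, htn⟩) := by
  have hbn := b.isLt
  have hAdj : ∀ i j : Fin (n-1), (erase G a).Adj i j ↔ (erase G b).Adj i j := by
    intro i j; rw [h]
  have hun1 : u < n - 1 := by omega
  have htn1 : t < n - 1 := by omega
  have e1 : delMap a (⟨u, hun1⟩ : Fin (n-1)) = (⟨u + 1, hun⟩ : Fin n) :=
    Fin.ext (by rw [delMap_val_ge (show ¬ ((⟨u, hun1⟩ : Fin (n-1)) : ℕ) < (a : ℕ) by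
      show ¬ u < (a:ℕ); omega)])
  have e2 : delMap b (⟨u, hun1⟩ : Fin (n-1)) = (⟨u, by omega⟩ : Fin n) :=
    Fin.ext (by rw [delMap_val_lt (show ((⟨u, hun1⟩ : Fin (n-1)) : ℕ) < (b : ℕ) from hu2)])
  have e3 : delMap a (⟨t, htn1⟩ : Fin (n-1)) = (⟨t + 1, htn⟩ : Fin n) :=
    Fin.ext (by rw [delMap_val_ge (show ¬ ((⟨t, htn1⟩ : Fin (n-1)) : ℕ) < (a : ℕ) by
      show ¬ t < (a:ℕ); omega)])
  have e4 : delMap b (⟨t, htn1⟩ : Fin (n-1)) = (⟨t, by omega⟩ : Fin n) :=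
    Fin.ext (by rw [delMap_val_lt (show ((⟨t, htn1⟩ : Fin (n-1)) : ℕ) < (b : ℕ) from ht2)])
  have := hAdj ⟨u, hun1⟩ ⟨t, htn1⟩
  rw [show (erase G a).Adj ⟨u, hun1⟩ ⟨t, htn1⟩
      = G.Adj (delMap a ⟨u, hun1⟩) (delMap a ⟨t, htn1⟩) from rfl,
    show (erase G b).Adj ⟨u, hun1⟩ ⟨t, htn1⟩
      = G.Adj (delMap b ⟨u, hun1⟩) (delMap b ⟨t, htn1⟩) from rfl,
    e1, e2, e3, e4] at this
  exact this.symm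

lemma fiber3 {a b c : Fin n} (hab : (a : ℕ) < b) (hbc : (b : ℕ) < c)
    (h1 : erase G a = erase G b) (h2 : erase G a = erase G c) :
    ∀ j, (a : ℕ) ≤ j → j + 1 ≤ (c : ℕ) → stp G j := by
  have hcn := c.isLt
  have hbn := b.isLt
  -- C2 : diagonal normalisation inside the big square [a,c]
  have C2 : ∀ (d u t : ℕ) (hun : u < n) (htn : t < n) (he : u = (a : ℕ) + d)
      (hut : u ≤ t) (htc : t ≤ (c : ℕ)),
      (G.Adj ⟨u, hun⟩ ⟨t, htn⟩ ↔
        G.Adj ⟨(a : ℕ), by omega⟩ ⟨(a : ℕ) + (t - u), by omega⟩) := by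
    intro d
    induction d with
    | zero =>
      intro u t hun htn he hut htc
      have g1 : (⟨u, hun⟩ : Fin n) = ⟨(a : ℕ), by omega⟩ := Fin.ext (by
        show u = (a : ℕ); omega)
      have g2 : (⟨t, htn⟩ : Fin n) = ⟨(a : ℕ) + (t - u), by omega⟩ := Fin.ext (by
        show t = (a : ℕ) + (t - u); omega)
      rw [g1, g2]
    | succ d ih =>
      intro u t hun htn he hut htc
      by_cases hut' : u = t
      · subst hut'
        have g2 : (⟨(a : ℕ) + (u - u), by omega⟩ : Fin n) = ⟨(a : ℕ), by omega⟩ :=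
          Fin.ext (by show (a:ℕ) + (u - u) = (a:ℕ); omega)
        rw [g2]
        exact iff_of_false (G.irrefl) (G.irrefl)
      · have hult : u - 1 + 1 < n := by omega
        have htlt : t - 1 + 1 < n := by omega
        have hstep := erase_shift_diag G (show (a:ℕ) < c by omega) h2 (u - 1) (t - 1)
          (by omega) (by omega) (by omega) (by omega) hult htlt
        have g1 : (⟨u - 1 + 1, hult⟩ : Fin n) = ⟨u, hun⟩ := Fin.ext (by
          show u - 1 + 1 = u; omega)
        have g2 : (⟨t - 1 + 1, htlt⟩ : Fin n) = ⟨t, htn⟩ := Fin.ext (by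
          show t - 1 + 1 = t; omega)
        rw [g1, g2] at hstep
        have hih := ih (u - 1) (t - 1) (by omega) (by omega) (by omega) (by omega) (by omega)
        have g3 : (⟨(a : ℕ) + (t - 1 - (u - 1)), by omega⟩ : Fin n)
            = ⟨(a : ℕ) + (t - u), by omega⟩ := Fin.ext (by
          show (a:ℕ) + (t - 1 - (u - 1)) = (a:ℕ) + (t - u); omega)
        rw [g3] at hih
        exact hstep.symm.trans hih
  -- gAll : the value depends only on the difference, and is constant
  have C3 : ∀ (d : ℕ) (hd2 : 2 ≤ d) (hdc : (a : ℕ) + d ≤ (c : ℕ)),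
      (G.Adj ⟨(a : ℕ), by omega⟩ ⟨(a : ℕ) + d, by omega⟩ ↔
        G.Adj ⟨(a : ℕ), by omega⟩ ⟨(a : ℕ) + (d - 1), by omega⟩) := by
    intro d hd2 hdc
    set w : ℕ := max ((b : ℕ) + 1) ((a : ℕ) + d) with hw
    set u : ℕ := w - d with hu
    have hw1 : (b : ℕ) < w := by omega
    have hw2 : w ≤ (c : ℕ) := by omega
    have hua : (a : ℕ) ≤ u := by omega
    have hub : u < (b : ℕ) := by omega
    have hF1 := erase_shift_out G hab h1 u w hua hub (Or.inr ⟨hw1, by omega⟩)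
      (by omega) (by omega)
    have hl := C2 (u - (a : ℕ)) u w (by omega) (by omega) (by omega) (by omega) hw2
    have hr := C2 (u + 1 - (a : ℕ)) (u + 1) w (by omega) (by omega) (by omega)
      (by omega) hw2
    have g1 : (⟨(a : ℕ) + (w - u), by omega⟩ : Fin n) = ⟨(a : ℕ) + d, by omega⟩ :=
      Fin.ext (by show (a:ℕ) + (w - u) = (a:ℕ) + d; omega)
    have g2 : (⟨(a : ℕ) + (w - (u + 1)), by omega⟩ : Fin n)
        = ⟨(a : ℕ) + (d - 1), by omega⟩ :=
      Fin.ext (by show (a:ℕ) + (w - (u + 1)) = (a:ℕ) + (d - 1); omega)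
    rw [g1] at hl
    rw [g2] at hr
    exact hl.symm.trans (hF1.trans hr)
  have gAll : ∀ (d : ℕ) (hd1 : 1 ≤ d) (hdc : (a : ℕ) + d ≤ (c : ℕ)),
      (G.Adj ⟨(a : ℕ), by omega⟩ ⟨(a : ℕ) + d, by omega⟩ ↔
        G.Adj ⟨(a : ℕ), by omega⟩ ⟨(a : ℕ) + 1, by omega⟩) := by
    intro d
    induction d with
    | zero => omega
    | succ d ih =>
      intro hd1 hdc
      by_cases hd : d = 0
      · subst hd; exact Iff.rfl
      · have hc3 := C3 (d + 1) (by omega) hdc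
        have g1 : (⟨(a : ℕ) + (d + 1 - 1), by omega⟩ : Fin n) = ⟨(a : ℕ) + d, by omega⟩ :=
          Fin.ext (by show (a:ℕ) + (d + 1 - 1) = (a:ℕ) + d; omega)
        rw [g1] at hc3
        exact hc3.trans (ih (by omega) (by omega))
  -- square : any two distinct vertices in [a,c] are adjacent iff the base pair is
  have square : ∀ (u t : ℕ) (hun : u < n) (htn : t < n) (hau : (a : ℕ) ≤ u)
      (hut : u < t) (htc : t ≤ (c : ℕ)),
      (G.Adj ⟨u, hun⟩ ⟨t, htn⟩ ↔
        G.Adj ⟨(a : ℕ), by omega⟩ ⟨(a : ℕ) + 1, by omega⟩) := by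
    intro u t hun htn h1' h2' h3'
    have hd := C2 (u - (a : ℕ)) u t hun htn (by omega) (by omega) h3'
    exact hd.trans (gAll (t - u) (by omega) (by omega))
  -- conclusion
  intro j hj1 hj2 hjn
  intro w hw1 hw2
  have hwn := w.isLt
  by_cases hcase : (w : ℕ) < (a : ℕ) ∨ ((c : ℕ) < (w : ℕ) ∧ (w : ℕ) < n)
  · have := erase_shift_out G (show (a:ℕ) < c by omega) h2 j (w : ℕ) hj1 (by omega)
      hcase hjn hwn
    have gw : (⟨(w : ℕ), hwn⟩ : Fin n) = w := Fin.ext rfl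
    rw [gw] at this
    exact this
  · -- w inside [a,c]
    have hwa : (a : ℕ) ≤ (w : ℕ) := by omega
    have hwc : (w : ℕ) ≤ (c : ℕ) := by omega
    have hwj : (w : ℕ) ≠ j := fun e => hw1 (Fin.ext e)
    have hwj1 : (w : ℕ) ≠ j + 1 := fun e => hw2 (Fin.ext e)
    have gw : (⟨(w : ℕ), hwn⟩ : Fin n) = w := Fin.ext rfl
    rcases lt_or_gt_of_ne hwj with hlt | hgt
    · -- w < j : use symmetry
      have s1 := square (w : ℕ) j hwn (by omega) hwa hlt (by omega)
      have s2 := square (w : ℕ) (j + 1) hwn hjn hwa (by omega) (by omega)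
      rw [gw] at s1 s2
      rw [G.adj_comm ⟨j, by omega⟩ w, G.adj_comm ⟨j + 1, hjn⟩ w]
      exact s1.trans s2.symm
    · -- w > j, and w ≠ j+1 so w > j+1
      have s1 := square j (w : ℕ) (by omega) hwn hj1 hgt hwc
      have s2 := square (j + 1) (w : ℕ) hjn hwn (by omega) (by omega) hwc
      rw [gw] at s1 s2
      exact s1.trans s2.symm

end FiberAnalysis

section Assembly

variable {n : ℕ} (G : SimpleGraph (Fin n))

open Classical in
/-- the full fiber of `H` under `v ↦ G − v` -/
noncomputable def ffib (H : SimpleGraph (Fin (n - 1))) : Finset (Fin n) :=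
  Finset.univ.filter (fun v => erase G v = H)

open Classical in
/-- block index attached to a fiber -/
noncomputable def kap (H : SimpleGraph (Fin (n - 1))) : ℕ :=
  if hne : (ffib G H).Nonempty then fN (stp G) (((ffib G H).min' hne : Fin n) : ℕ) else 0

lemma mem_ffib {H : SimpleGraph (Fin (n - 1))} {v : Fin n} :
    v ∈ ffib G H ↔ erase G v = H := by
  classical
  simp [ffib]

lemma kap_eq {H : SimpleGraph (Fin (n - 1))} (hne : (ffib G H).Nonempty) :
    kap G H = fN (stp G) (((ffib G H).min' hne : Fin n) : ℕ) := by
  rw [kap, dif_pos hne]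

lemma erase_min_eq {H : SimpleGraph (Fin (n - 1))} (hne : (ffib G H).Nonempty) :
    erase G ((ffib G H).min' hne) = H :=
  (mem_ffib G).1 ((ffib G H).min'_mem hne)

lemma kap_injOn {H H' : SimpleGraph (Fin (n - 1))}
    (hne : (ffib G H).Nonempty) (hne' : (ffib G H').Nonempty)
    (h : kap G H = kap G H') : H = H' := by
  rw [kap_eq G hne, kap_eq G hne'] at h
  have := erase_eq_of_fN_eq G h
  rw [erase_min_eq G hne, erase_min_eq G hne'] at this
  exact this

lemma ffib_subset_block {H : SimpleGraph (Fin (n - 1))} (h3 : 3 ≤ (ffib G H).card) :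
    ∀ u ∈ ffib G H, fN (stp G) (u : ℕ) = kap G H := by
  classical
  have hne : (ffib G H).Nonempty := Finset.card_pos.1 (by omega)
  set x0 := (ffib G H).min' hne with hx0
  rw [kap_eq G hne, ← hx0]
  intro u hu
  by_cases hux : u = x0
  · rw [hux]
  · -- find a third element
    have hex : ∃ t ∈ ffib G H, t ≠ x0 ∧ t ≠ u := by
      by_contra hcon
      push_neg at hcon
      have hsub : ffib G H ⊆ ({x0, u} : Finset (Fin n)) := by
        intro t ht
        rcases Classical.em (t = x0) with he | he
        · simp [he]
        · simp [hcon t ht he]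
      have := Finset.card_le_card hsub
      have h2 : ({x0, u} : Finset (Fin n)).card ≤ 2 := by
        apply le_trans (Finset.card_insert_le _ _); simp
      omega
    obtain ⟨t, ht, htx, htu⟩ := hex
    have hx0u : (x0 : ℕ) < (u : ℕ) := by
      have h1 := (ffib G H).min'_le u hu
      have h2 : x0 ≠ u := fun e => hux e.symm
      rw [← hx0] at h1
      have := Fin.lt_def.1 (lt_of_le_of_ne h1 h2)
      exact this
    have hx0t : (x0 : ℕ) < (t : ℕ) := by
      have h1 := (ffib G H).min'_le t ht
      rw [← hx0] at h1
      exact Fin.lt_def.1 (lt_of_le_of_ne h1 (Ne.symm htx))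
    have hex0 : erase G x0 = H := erase_min_eq G hne
    have heu : erase G u = H := (mem_ffib G).1 hu
    have het : erase G t = H := (mem_ffib G).1 ht
    have hvne : (t : ℕ) ≠ (u : ℕ) := fun e => htu (Fin.ext e)
    rcases lt_or_gt_of_ne hvne with hlt | hgt
    · -- x0 < t < u
      have hsteps := fiber3 G hx0t hlt (hex0.trans het.symm) (hex0.trans heu.symm)
      symm
      rw [fN_eq_iff _ (le_of_lt hx0u)]
      intro k hk1 hk2
      exact hsteps k hk1 (by omega)
    · -- x0 < u < t
      have hsteps := fiber3 G hx0u hgt (hex0.trans heu.symm) (hex0.trans het.symm)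
      symm
      rw [fN_eq_iff _ (le_of_lt hx0u)]
      intro k hk1 hk2
      exact hsteps k hk1 (by omega)

lemma kap_mem {H : SimpleGraph (Fin (n - 1))} (hne : (ffib G H).Nonempty) :
    kap G H ∈ (Finset.range n).image (fN (stp G)) := by
  rw [kap_eq G hne]
  exact Finset.mem_image.2 ⟨_, Finset.mem_range.2 (Fin.isLt _), rfl⟩

lemma ffib_card_le {H : SimpleGraph (Fin (n - 1))} (hne : (ffib G H).Nonempty) :
    (ffib G H).card - 2 ≤ (BlkV G (kap G H)).card - 2 := by
  classical
  by_cases h3 : 3 ≤ (ffib G H).card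
  · have hsub : ffib G H ⊆ BlkV G (kap G H) := by
      intro u hu
      exact (mem_BlkV G).2 (ffib_subset_block G h3 u hu)
    have := Finset.card_le_card hsub
    omega
  · omega

/-- key fiber-counting bound -/
lemma sum_ffib_le (imgF : Finset (SimpleGraph (Fin (n - 1))))
    (himg : ∀ H ∈ imgF, (ffib G H).Nonempty) :
    ∑ H ∈ imgF, ((ffib G H).card - 2) ≤ excess G := by
  classical
  calc ∑ H ∈ imgF, ((ffib G H).card - 2)
      ≤ ∑ H ∈ imgF, ((BlkV G (kap G H)).card - 2) :=
        Finset.sum_le_sum (fun H hH => ffib_card_le G (himg H hH))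
    _ = ∑ k ∈ imgF.image (kap G), ((BlkV G k).card - 2) := by
        rw [Finset.sum_image]
        intro H hH H' hH' he
        exact kap_injOn G (himg H hH) (himg H' hH') he
    _ ≤ ∑ k ∈ (Finset.range n).image (fN (stp G)), ((BlkV G k).card - 2) := by
        apply Finset.sum_le_sum_of_subset
        intro k hk
        obtain ⟨H, hH, rfl⟩ := Finset.mem_image.1 hk
        exact kap_mem G (himg H hH)
    _ = excess G := (excess_eq_sum G).symm

end Assembly


/-- **Lemma (shadows keep the excess small).** For an ordered graph `G` on `[n]` and `r ≥ 1`,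
`|{H ∈ ∂G : m(H) ≤ m(G) + 2r + 1}| ≥ (1/2)(1 − 1/r)n − m(G)/2`. -/
theorem small_excess_in_shadow (n : ℕ) (G : SimpleGraph (Fin n)) (r : ℕ) (hr : 1 ≤ r) :
    (1 / 2 : ℝ) * (1 - 1 / (r : ℝ)) * (n : ℝ) - (excess G : ℝ) / 2 ≤
      (({H ∈ shadow G | excess H ≤ excess G + 2 * r + 1}).ncard : ℝ) := by
  classical
  set S : Set (SimpleGraph (Fin (n - 1))) :=
    {H ∈ shadow G | excess H ≤ excess G + 2 * r + 1} with hS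
  set goodF : Finset (Fin n) :=
    Finset.univ.filter (fun v => excess (erase G v) ≤ excess G + 2 * r + 1) with hgood
  set imgF : Finset (SimpleGraph (Fin (n - 1))) :=
    goodF.image (fun v => erase G v) with himgF
  have hsub : ↑imgF ⊆ S := by
    intro H hH
    obtain ⟨v, hv, rfl⟩ := Finset.mem_image.1 (Finset.mem_coe.1 hH)
    exact ⟨⟨v, rfl⟩, (Finset.mem_filter.1 hv).2⟩
  have hcard1 : imgF.card ≤ S.ncard := by
    rw [← Set.ncard_coe_finset]
    exact Set.ncard_le_ncard hsub (Set.toFinite S)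
  have himgne : ∀ H ∈ imgF, (ffib G H).Nonempty := by
    intro H hH
    obtain ⟨v, hv, rfl⟩ := Finset.mem_image.1 hH
    exact ⟨v, (mem_ffib G).2 rfl⟩
  have hfib : goodF.card = ∑ H ∈ imgF, (goodF.filter (fun v => erase G v = H)).card :=
    Finset.card_eq_sum_card_fiberwise (fun v hv => Finset.mem_image_of_mem _ hv)
  have hcard2 : goodF.card ≤ 2 * imgF.card + excess G := by
    have hstep : ∀ H ∈ imgF, (goodF.filter (fun v => erase G v = H)).card
        ≤ 2 + ((ffib G H).card - 2) := by
      intro H _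
      have h1 : (goodF.filter (fun v => erase G v = H)).card ≤ (ffib G H).card := by
        apply Finset.card_le_card
        intro v hv
        exact (mem_ffib G).2 (Finset.mem_filter.1 hv).2
      omega
    have hsum2 := sum_ffib_le G imgF himgne
    calc goodF.card = ∑ H ∈ imgF, (goodF.filter (fun v => erase G v = H)).card := hfib
      _ ≤ ∑ H ∈ imgF, (2 + ((ffib G H).card - 2)) := Finset.sum_le_sum hstep
      _ = 2 * imgF.card + ∑ H ∈ imgF, ((ffib G H).card - 2) := by
          rw [Finset.sum_add_distrib, Finset.sum_const, smul_eq_mul, mul_comm]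
      _ ≤ 2 * imgF.card + excess G := by omega
  have hgle : goodF.card ≤ n := by
    have := Finset.card_le_univ goodF
    simpa using this
  have hbadcount : r * (n - goodF.card) ≤ n := by
    set badF : Finset (Fin n) := Finset.univ.filter
      (fun v : Fin n => ¬ (excess (erase G v) ≤ excess G + 2 * r + 1)) with hbadF
    have hsplit : goodF.card + badF.card = n := by
      rw [hgood, hbadF]
      rw [Finset.card_filter_add_card_filter_not]
      simp
    have hlow : ∀ v ∈ badF, r ≤ (Mset G v).card := by
      intro v hv
      have hnb := (Finset.mem_filter.1 hv).2
      have := excess_erase_le G v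
      omega
    have hchain : r * badF.card ≤ n := by
      calc r * badF.card = ∑ _v ∈ badF, r := by
            rw [Finset.sum_const, smul_eq_mul, mul_comm]
        _ ≤ ∑ v ∈ badF, (Mset G v).card := Finset.sum_le_sum hlow
        _ ≤ ∑ v : Fin n, (Mset G v).card :=
            Finset.sum_le_sum_of_subset (Finset.subset_univ badF)
        _ ≤ n - 1 := sum_M_le G
        _ ≤ n := by omega
    have : n - goodF.card = badF.card := by omega
    rw [this]
    exact hchain
  -- real arithmetic
  have hr0 : (0 : ℝ) < (r : ℝ) := by
    have : (0 : ℕ) < r := by omega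
    exact_mod_cast this
  have h1R : (goodF.card : ℝ) ≤ 2 * (S.ncard : ℝ) + (excess G : ℝ) := by
    have hN : goodF.card ≤ 2 * S.ncard + excess G := by omega
    exact_mod_cast hN
  have h2R : (n : ℝ) - (n : ℝ) / (r : ℝ) ≤ (goodF.card : ℝ) := by
    have hcast : ((r : ℝ)) * ((n : ℝ) - (goodF.card : ℝ)) ≤ (n : ℝ) := by
      have h := hbadcount
      have h2 : ((r * (n - goodF.card) : ℕ) : ℝ) ≤ ((n : ℕ) : ℝ) := by exact_mod_cast h
      rw [Nat.cast_mul, Nat.cast_sub hgle] at h2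
      exact h2
    have hdiv : (n : ℝ) - (goodF.card : ℝ) ≤ (n : ℝ) / (r : ℝ) := by
      rw [le_div_iff₀ hr0]
      calc ((n : ℝ) - (goodF.card : ℝ)) * (r : ℝ)
          = (r : ℝ) * ((n : ℝ) - (goodF.card : ℝ)) := by ring
        _ ≤ (n : ℝ) := hcast
    linarith
  have hkey : (1 / 2 : ℝ) * (1 - 1 / (r : ℝ)) * (n : ℝ) - (excess G : ℝ) / 2
      = (((n : ℝ) - (n : ℝ) / (r : ℝ)) - (excess G : ℝ)) / 2 := by
    field_simp
  rw [hkey]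
  linarith

end OrderedGraphs
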